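/- Constancy lemma: Let d, m ≥ 1, let K ⊆ ℝ^d × ℝ^m be a nonempty compact set, let h : ℝ^d × ℝ^m → ℝ be upper semicontinuous on K, let φ : ℝ^d → ℝ be twice continuously differentiable, and let G ⊆ ℝ^d be a bounded, open, connected set. Assume that for every ζ ∈ G there exists a point (r_ζ, ρ_ζ) ∈ K maximizing H_ζ(r,ρ) := h(r,ρ) − φ(r − ζ) over K and satisfying ∇φ(r_ζ − ζ) = 0. Then the function h_φ(ζ) := sup_{(r,ρ) ∈ K} (h(r,ρ) − φ(r − ζ)) is constant on G. -/

import Mathlib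

/-- **Constancy lemma.** If for every `ζ` in a bounded open connected set `G` the function
`H_ζ(r,ρ) = h(r,ρ) - φ(r - ζ)` attains its maximum over the nonempty compact set `K` at a
point where `∇φ(r - ζ) = 0`, then `ζ ↦ sup_K H_ζ` is constant on `G`. -/
theorem constancy_lemma (d m : ℕ) (hd : 1 ≤ d) (hm : 1 ≤ m)
    (K : Set (EuclideanSpace ℝ (Fin d) × EuclideanSpace ℝ (Fin m)))
    (hKne : K.Nonempty) (hKc : IsCompact K)
    (h : EuclideanSpace ℝ (Fin d) × EuclideanSpace ℝ (Fin m) → ℝ)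
    (hh : UpperSemicontinuousOn h K)
    (φ : EuclideanSpace ℝ (Fin d) → ℝ) (hφ : ContDiff ℝ 2 φ)
    (G : Set (EuclideanSpace ℝ (Fin d)))
    (hGo : IsOpen G) (hGb : Bornology.IsBounded G) (hGc : IsConnected G)
    (hmax : ∀ ζ ∈ G, ∃ p ∈ K,
      (∀ q ∈ K, h q - φ (q.1 - ζ) ≤ h p - φ (p.1 - ζ)) ∧
      fderiv ℝ φ (p.1 - ζ) = 0) :
    ∀ ζ₁ ∈ G, ∀ ζ₂ ∈ G,
      sSup ((fun q => h q - φ (q.1 - ζ₁)) '' K) =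
        sSup ((fun q => h q - φ (q.1 - ζ₂)) '' K) := by
  intro ζ₁ hζ₁ ζ₂ hζ₂
  set F : EuclideanSpace ℝ (Fin d) → ℝ :=
    fun ζ => sSup ((fun q => h q - φ (q.1 - ζ)) '' K) with hFdef
  show F ζ₁ = F ζ₂
  -- maximizers give `IsGreatest` of the image set
  have hgreat : ∀ ζ ∈ G, ∃ p ∈ K, fderiv ℝ φ (p.1 - ζ) = 0 ∧
      IsGreatest ((fun q => h q - φ (q.1 - ζ)) '' K) (h p - φ (p.1 - ζ)) := by
    intro ζ hζ
    obtain ⟨p, hpK, hub, hd0⟩ := hmax ζ hζ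
    refine ⟨p, hpK, hd0, ⟨Set.mem_image_of_mem _ hpK, ?_⟩⟩
    rintro x ⟨q, hq, rfl⟩
    exact hub q hq
  have hφd : Differentiable ℝ φ := hφ.differentiable (by norm_num)
  have hφ1 : ContDiff ℝ 1 (fderiv ℝ φ) := hφ.fderiv_right (by norm_num)
  -- key quadratic estimate on balls inside G
  have key : ∀ ζ₀ ∈ G, ∀ ε : ℝ, 0 < ε → Metric.closedBall ζ₀ ε ⊆ G →
      ∃ C : ℝ, 0 ≤ C ∧ ∀ ζ ∈ Metric.closedBall ζ₀ ε, ∀ ζ' ∈ Metric.closedBall ζ₀ ε,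
        F ζ - F ζ' ≤ C * ‖ζ - ζ'‖ ^ 2 := by
    intro ζ₀ hζ₀ ε hε hcbG
    set T : Set (EuclideanSpace ℝ (Fin d)) :=
      (fun x : (EuclideanSpace ℝ (Fin d) × EuclideanSpace ℝ (Fin m)) ×
          EuclideanSpace ℝ (Fin d) => x.1.1 - x.2) '' (K ×ˢ Metric.closedBall ζ₀ (3 * ε))
      with hTdef
    have hTc : IsCompact T :=
      (hKc.prod (isCompact_closedBall _ _)).image (by fun_prop)
    obtain ⟨C₀, hC₀⟩ := hTc.exists_bound_of_continuousOn
      ((hφ1.continuous_fderiv one_ne_zero).continuousOn)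
    set C := max C₀ 0 with hCdef
    have hC0 : 0 ≤ C := le_max_right _ _
    refine ⟨C, hC0, ?_⟩
    intro ζ hζ ζ' hζ'
    obtain ⟨p, hpK, hd0, hgr⟩ := hgreat ζ (hcbG hζ)
    obtain ⟨p', hp'K, hd0', hgr'⟩ := hgreat ζ' (hcbG hζ')
    have hFζ : F ζ = h p - φ (p.1 - ζ) := hgr.csSup_eq
    have hFζ' : h p - φ (p.1 - ζ') ≤ F ζ' :=
      le_csSup hgr'.bddAbove ⟨p, hpK, rfl⟩
    -- the small ball around the maximizer point lies in T
    have hsub : Metric.closedBall (p.1 - ζ) ‖ζ - ζ'‖ ⊆ T := by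
      intro x hx
      rw [Metric.mem_closedBall, dist_eq_norm] at hx
      refine ⟨(p, p.1 - x), ⟨hpK, ?_⟩, by simp⟩
      rw [Metric.mem_closedBall, dist_eq_norm]
      have h2 : ‖(p.1 - x) - ζ‖ = ‖x - (p.1 - ζ)‖ := by
        rw [← norm_neg]; congr 1; abel
      have h3 : ‖ζ - ζ'‖ ≤ ‖ζ - ζ₀‖ + ‖ζ₀ - ζ'‖ := norm_sub_le_norm_sub_add_norm_sub ζ ζ₀ ζ'
      have hζd : ‖ζ - ζ₀‖ ≤ ε := by
        rw [Metric.mem_closedBall, dist_eq_norm] at hζ; exact hζ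
      have hζ'd : ‖ζ₀ - ζ'‖ ≤ ε := by
        rw [Metric.mem_closedBall, dist_eq_norm] at hζ'
        rw [norm_sub_rev]; exact hζ'
      calc ‖(p.1 - x) - ζ₀‖ ≤ ‖(p.1 - x) - ζ‖ + ‖ζ - ζ₀‖ := norm_sub_le_norm_sub_add_norm_sub _ _ _
        _ = ‖x - (p.1 - ζ)‖ + ‖ζ - ζ₀‖ := by rw [h2]
        _ ≤ ‖ζ - ζ'‖ + ε := add_le_add hx hζd
        _ ≤ (‖ζ - ζ₀‖ + ‖ζ₀ - ζ'‖) + ε := add_le_add_left h3 ε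
        _ ≤ (ε + ε) + ε := add_le_add_left (add_le_add hζd hζ'd) ε
        _ = 3 * ε := by ring
    -- the gradient is `C`-Lipschitz on the small ball, and vanishes at the center
    have hdb : ∀ x ∈ Metric.closedBall (p.1 - ζ) ‖ζ - ζ'‖,
        ‖fderiv ℝ φ x‖ ≤ C * ‖ζ - ζ'‖ := by
      intro x hx
      have hlip := (convex_closedBall (p.1 - ζ) ‖ζ - ζ'‖).norm_image_sub_le_of_norm_fderiv_le
        (f := fderiv ℝ φ) (C := C)
        (fun z _ => (hφ1.differentiable one_ne_zero).differentiableAt)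
        (fun z hz => le_trans (hC₀ _ (hsub hz)) (le_max_left C₀ 0))
        (Metric.mem_closedBall_self (norm_nonneg _)) hx
      rw [hd0, sub_zero] at hlip
      refine hlip.trans (mul_le_mul_of_nonneg_left ?_ hC0)
      rw [Metric.mem_closedBall, dist_eq_norm] at hx; exact hx
    have hmem' : p.1 - ζ' ∈ Metric.closedBall (p.1 - ζ) ‖ζ - ζ'‖ := by
      rw [Metric.mem_closedBall, dist_eq_norm]
      have : (p.1 - ζ') - (p.1 - ζ) = ζ - ζ' := by abel
      rw [this]
    have hφest : ‖φ (p.1 - ζ') - φ (p.1 - ζ)‖ ≤ (C * ‖ζ - ζ'‖) * ‖(p.1 - ζ') - (p.1 - ζ)‖ :=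
      (convex_closedBall (p.1 - ζ) ‖ζ - ζ'‖).norm_image_sub_le_of_norm_fderiv_le
        (fun z _ => hφd.differentiableAt) hdb
        (Metric.mem_closedBall_self (norm_nonneg _)) hmem'
    have hdiffnorm : ‖(p.1 - ζ') - (p.1 - ζ)‖ = ‖ζ - ζ'‖ := by
      have : (p.1 - ζ') - (p.1 - ζ) = ζ - ζ' := by abel
      rw [this]
    rw [hdiffnorm] at hφest
    have hle : φ (p.1 - ζ') - φ (p.1 - ζ) ≤ C * ‖ζ - ζ'‖ ^ 2 := by
      have := le_trans (le_abs_self _) (by rwa [Real.norm_eq_abs] at hφest)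
      nlinarith [this]
    have : F ζ - F ζ' ≤ (h p - φ (p.1 - ζ)) - (h p - φ (p.1 - ζ')) := by
      rw [hFζ]; linarith
    linarith
  -- local constancy of F on G
  have hloc : ∀ ζ₀ ∈ G, ∃ ε > 0, Metric.ball ζ₀ ε ⊆ G ∧
      ∀ ζ ∈ Metric.ball ζ₀ ε, F ζ = F ζ₀ := by
    intro ζ₀ hζ₀
    obtain ⟨ε, hε, hball⟩ := Metric.isOpen_iff.1 hGo ζ₀ hζ₀
    have hcb : Metric.closedBall ζ₀ (ε / 2) ⊆ G :=
      (Metric.closedBall_subset_ball (by linarith)).trans hball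
    obtain ⟨C, hC0, hest⟩ := key ζ₀ hζ₀ (ε / 2) (by linarith) hcb
    refine ⟨ε / 2, by linarith, Metric.ball_subset_closedBall.trans hcb, ?_⟩
    intro ζ hζ
    have hζcb : ζ ∈ Metric.closedBall ζ₀ (ε / 2) := Metric.ball_subset_closedBall hζ
    have habs : ∀ a ∈ Metric.closedBall ζ₀ (ε / 2), ∀ b ∈ Metric.closedBall ζ₀ (ε / 2),
        |F a - F b| ≤ C * ‖a - b‖ ^ 2 := by
      intro a ha b hb
      rw [abs_sub_le_iff]
      refine ⟨hest a ha b hb, ?_⟩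
      rw [norm_sub_rev]; exact hest b hb a ha
    -- telescoping: subdivide the segment into n pieces
    set A := C * ‖ζ - ζ₀‖ ^ 2 with hAdef
    have hA0 : 0 ≤ A := mul_nonneg hC0 (by positivity)
    have hsubdiv : ∀ n : ℕ, 1 ≤ n → |F ζ - F ζ₀| ≤ A / n := by
      intro n hn
      have hn0 : (0 : ℝ) < n := by exact_mod_cast hn
      set x : ℕ → EuclideanSpace ℝ (Fin d) :=
        fun k => ζ₀ + ((k : ℝ) / n) • (ζ - ζ₀) with hxdef
      have hx0 : x 0 = ζ₀ := by simp [hxdef]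
      have hxn : x n = ζ := by
        simp only [hxdef, div_self hn0.ne', one_smul]
        abel
      have hxmem : ∀ k ≤ n, x k ∈ Metric.closedBall ζ₀ (ε / 2) := by
        intro k hk
        rw [Metric.mem_closedBall, dist_eq_norm]
        have : x k - ζ₀ = ((k : ℝ) / n) • (ζ - ζ₀) := by simp [hxdef]
        rw [this, norm_smul]
        have hfrac : ‖((k : ℝ) / n)‖ ≤ 1 := by
          rw [Real.norm_eq_abs, abs_div, abs_of_nonneg (Nat.cast_nonneg k),
            abs_of_pos hn0, div_le_one hn0]
          exact_mod_cast hk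
        have hζd : ‖ζ - ζ₀‖ ≤ ε / 2 := by
          rw [Metric.mem_closedBall, dist_eq_norm] at hζcb; exact hζcb
        calc ‖((k : ℝ) / n)‖ * ‖ζ - ζ₀‖ ≤ 1 * ‖ζ - ζ₀‖ :=
              mul_le_mul_of_nonneg_right hfrac (norm_nonneg _)
          _ = ‖ζ - ζ₀‖ := one_mul _
          _ ≤ ε / 2 := hζd
      have hstep : ∀ k : ℕ, x (k + 1) - x k = ((1 : ℝ) / n) • (ζ - ζ₀) := by
        intro k
        simp only [hxdef]
        rw [add_sub_add_left_eq_sub, ← sub_smul]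
        congr 1
        push_cast
        ring
      have htele : F ζ - F ζ₀ = ∑ k ∈ Finset.range n, (F (x (k + 1)) - F (x k)) := by
        rw [Finset.sum_range_sub (fun k => F (x k)) n, hx0, hxn]
      have hterm : ∀ k ∈ Finset.range n, |F (x (k + 1)) - F (x k)| ≤ A / n ^ 2 := by
        intro k hk
        rw [Finset.mem_range] at hk
        have h1 := habs (x (k + 1)) (hxmem (k + 1) hk) (x k) (hxmem k hk.le)
        have h2 : ‖x (k + 1) - x k‖ = ‖ζ - ζ₀‖ / n := by
          rw [hstep k, norm_smul, Real.norm_eq_abs, abs_of_pos (by positivity : (0:ℝ) < 1 / n)]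
          field_simp
        rw [h2] at h1
        refine h1.trans (le_of_eq ?_)
        rw [hAdef]
        field_simp
      calc |F ζ - F ζ₀| = |∑ k ∈ Finset.range n, (F (x (k + 1)) - F (x k))| := by rw [htele]
        _ ≤ ∑ k ∈ Finset.range n, |F (x (k + 1)) - F (x k)| := Finset.abs_sum_le_sum_abs _ _
        _ ≤ ∑ _k ∈ Finset.range n, A / n ^ 2 := Finset.sum_le_sum hterm
        _ = n * (A / n ^ 2) := by rw [Finset.sum_const, Finset.card_range, nsmul_eq_mul]
        _ = A / n := by field_simp
    -- conclude F ζ = F ζ₀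
    by_contra hne
    have hD : 0 < |F ζ - F ζ₀| := abs_pos.mpr (sub_ne_zero.mpr hne)
    obtain ⟨n, hn⟩ := exists_nat_gt (A / |F ζ - F ζ₀|)
    have hn0 : (0 : ℝ) < n := lt_of_le_of_lt (div_nonneg hA0 hD.le) hn
    have hn1 : 1 ≤ n := by exact_mod_cast Nat.one_le_iff_ne_zero.mpr (by
      intro h0; rw [h0] at hn0; simp at hn0)
    have h1 := hsubdiv n hn1
    have h2 : A < n * |F ζ - F ζ₀| := (div_lt_iff₀ hD).1 hn
    have h3 : |F ζ - F ζ₀| * n ≤ A := (le_div_iff₀ hn0).1 h1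
    nlinarith
  -- connectedness argument
  by_contra hne
  set u : Set (EuclideanSpace ℝ (Fin d)) := {ζ | ζ ∈ G ∧ F ζ = F ζ₁} with hudef
  set v : Set (EuclideanSpace ℝ (Fin d)) := {ζ | ζ ∈ G ∧ F ζ ≠ F ζ₁} with hvdef
  have hu : IsOpen u := by
    rw [Metric.isOpen_iff]
    rintro ζ ⟨hζG, hζF⟩
    obtain ⟨ε, hε, hbG, hconst⟩ := hloc ζ hζG
    exact ⟨ε, hε, fun y hy => ⟨hbG hy, (hconst y hy).trans hζF⟩⟩
  have hv : IsOpen v := by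
    rw [Metric.isOpen_iff]
    rintro ζ ⟨hζG, hζF⟩
    obtain ⟨ε, hε, hbG, hconst⟩ := hloc ζ hζG
    exact ⟨ε, hε, fun y hy => ⟨hbG hy, fun hc => hζF ((hconst y hy).symm.trans hc)⟩⟩
  have hcover : G ⊆ u ∪ v := by
    intro ζ hζ
    by_cases hc : F ζ = F ζ₁
    · exact Or.inl ⟨hζ, hc⟩
    · exact Or.inr ⟨hζ, hc⟩
  have h1 : (G ∩ u).Nonempty := ⟨ζ₁, hζ₁, hζ₁, rfl⟩
  have h2 : (G ∩ v).Nonempty := ⟨ζ₂, hζ₂, hζ₂, fun hc => hne hc.symm⟩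
  obtain ⟨x, _, ⟨_, hxu⟩, ⟨_, hxv⟩⟩ := hGc.isPreconnected u v hu hv hcover h1 h2
  exact hxv hxu
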